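/- Let z_1, …, z_n ∈ ℂ be distinct with Re z_i > 0, let η_1, …, η_n ∈ ℂ^m be unit vectors, set L_k(s) = I − (2 Re z_k/(s + conj(z_k))) η_k η_k^H and L(s) = L_1(s) ⋯ L_n(s), and let Y be an m×m matrix of rational functions over ℂ, each entry proper and with no poles in the closed right half-plane {s : Re s ≥ 0}. Then there exists an m×m matrix T of rational functions, each entry proper and with no poles in the closed right half-plane, such that for every s at which all terms are defined, L(s)^{−1} Y(s) = T(s) + Σ_{i=1}^n (1/(s − z_i)) R_i, where R_i = L_n(z_i)^{−1} ⋯ L_{i+1}(z_i)^{−1} · (2 Re z_i) η_i η_i^H · L_{i−1}(z_i)^{−1} ⋯ L_1(z_i)^{−1} · Y(z_i). (Matrix form of Lemma 1: expansion of L^{−1}Y into a stable part plus simple antistable residue terms at the zeros z_i.) -/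

import Mathlib

open Matrix

/-- The rank-one matrix Blaschke (all-pass) factor
`L_{z,η}(s) = I - (2 Re z/(s + conj z)) η ηᴴ`. -/
noncomputable def blaschkeFactor (m : ℕ) (z : ℂ) (η : Fin m → ℂ) (s : ℂ) :
    Matrix (Fin m) (Fin m) ℂ :=
  1 - ((2 * (z.re : ℂ)) / (s + starRingEnd ℂ z)) •
    Matrix.vecMulVec η (fun i => starRingEnd ℂ (η i))

/-- The residue matrix
`R_i = L_n(z_i)⁻¹ ⋯ L_{i+1}(z_i)⁻¹ (2 Re z_i) η_i η_iᴴ L_{i-1}(z_i)⁻¹ ⋯ L_1(z_i)⁻¹ Y(z_i)`. -/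
noncomputable def residueMatrix (m n : ℕ) (z : Fin n → ℂ) (η : Fin n → Fin m → ℂ)
    (Y : Matrix (Fin m) (Fin m) (RatFunc ℂ)) (i : Fin n) :
    Matrix (Fin m) (Fin m) ℂ :=
  ((List.ofFn fun k : Fin n =>
      if i < k then (blaschkeFactor m (z k) (η k) (z i))⁻¹ else 1).reverse).prod *
    (((2 * ((z i).re : ℂ)) •
      Matrix.vecMulVec (η i) (fun l => starRingEnd ℂ (η i l)))) *
    ((List.ofFn fun k : Fin n =>
      if k < i then (blaschkeFactor m (z k) (η k) (z i))⁻¹ else 1).reverse).prod *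
    (Y.map (RatFunc.eval (RingHom.id ℂ) (z i)))


open Matrix Polynomial

section ListLemmas
variable {M : Type*} [Monoid M]

lemma ofFn_one_rev_prod (n : ℕ) :
    ((List.ofFn fun _ : Fin n => (1 : M)).reverse).prod = 1 := by
  simp

lemma ofFn_rev_prod_split :
    ∀ {n : ℕ} (A : Fin n → M) (i : Fin n),
      (List.ofFn A).reverse.prod =
        (List.ofFn fun k => if i < k then A k else 1).reverse.prod * A i *
          (List.ofFn fun k => if k < i then A k else 1).reverse.prod := by
  intro n
  induction n with
  | zero => exact fun A i => i.elim0
  | succ n ih =>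
    intro A i
    induction i using Fin.cases with
    | zero =>
      simp only [List.ofFn_succ, lt_self_iff_false, if_false, Fin.succ_pos, if_true,
        (Fin.not_lt_zero _ : ¬ _ < (0 : Fin (n+1)))]
      simp [List.reverse_cons, List.prod_append]
    | succ j =>
      have h0 : ¬ (Fin.succ j < (0 : Fin (n+1))) := Fin.not_lt_zero _
      simp only [List.ofFn_succ, Fin.succ_lt_succ_iff, h0, if_false, Fin.succ_pos, if_true,
        List.reverse_cons, List.prod_append, List.prod_cons, List.prod_nil, mul_one]
      rw [ih (fun k => A k.succ) j]
      simp [mul_assoc]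

lemma ofFn_prod_mul_rev_prod :
    ∀ {n : ℕ} (f g : Fin n → M), (∀ k, f k * g k = 1) →
      (List.ofFn f).prod * (List.ofFn g).reverse.prod = 1 := by
  intro n
  induction n with
  | zero => intro f g h; simp
  | succ n ih =>
    intro f g h
    simp only [List.ofFn_succ, List.prod_cons, List.reverse_cons, List.prod_append,
      List.prod_cons, List.prod_nil, mul_one]
    calc f 0 * (List.ofFn fun k => f k.succ).prod *
          ((List.ofFn fun k => g k.succ).reverse.prod * g 0)
        = f 0 * ((List.ofFn fun k => f k.succ).prod *
            (List.ofFn fun k => g k.succ).reverse.prod) * g 0 := by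
          simp only [mul_assoc]
      _ = 1 := by rw [ih _ _ (fun k => h k.succ)]; simpa using h 0

end ListLemmas


namespace BlaschkeAux

/-- entry-level representation: `q * f = p` in `RatFunc ℂ`. -/
def rp (f : RatFunc ℂ) (p q : Polynomial ℂ) : Prop :=
  algebraMap (Polynomial ℂ) (RatFunc ℂ) q * f = algebraMap (Polynomial ℂ) (RatFunc ℂ) p

lemma rp_key {f : RatFunc ℂ} {p q : Polynomial ℂ} (h : rp f p q) :
    f.num * q = p * f.denom := by
  apply RatFunc.algebraMap_injective ℂ
  have hden : algebraMap (Polynomial ℂ) (RatFunc ℂ) f.num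
      = f * algebraMap (Polynomial ℂ) (RatFunc ℂ) f.denom :=
    (div_eq_iff (RatFunc.algebraMap_ne_zero (RatFunc.denom_ne_zero f))).mp
      (RatFunc.num_div_denom f)
  rw [_root_.map_mul, _root_.map_mul, hden]
  rw [← h]; ring

lemma rp.denom_dvd {f : RatFunc ℂ} {p q : Polynomial ℂ} (h : rp f p q) :
    f.denom ∣ q := by
  have h1 : f.denom ∣ f.num * q := ⟨p, by rw [rp_key h, mul_comm]⟩
  exact ((RatFunc.isCoprime_num_denom f).symm).dvd_of_dvd_mul_left h1

lemma rp.eval {f : RatFunc ℂ} {p q : Polynomial ℂ} {s : ℂ} (h : rp f p q)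
    (hs : q.eval s ≠ 0) :
    RatFunc.eval (RingHom.id ℂ) s f = p.eval s / q.eval s := by
  obtain ⟨c, hc⟩ := h.denom_dvd
  have hds : f.denom.eval s ≠ 0 := fun h0 => hs (by rw [hc, Polynomial.eval_mul, h0, zero_mul])
  have keyev : f.num.eval s * q.eval s = p.eval s * f.denom.eval s := by
    have := congrArg (Polynomial.eval s) (rp_key h)
    simpa using this
  have hdef : RatFunc.eval (RingHom.id ℂ) s f = f.num.eval s / f.denom.eval s := rfl
  rw [hdef, div_eq_div_iff hds hs, keyev]

lemma rp.num_deg_le {f : RatFunc ℂ} {p q : Polynomial ℂ} (h : rp f p q)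
    (hq : q ≠ 0) (hdeg : p.degree ≤ q.degree) :
    f.num.degree ≤ f.denom.degree := by
  have key := rp_key h
  by_cases hnum : f.num = 0
  · simp [hnum]
  · have hp : p ≠ 0 := by
      rintro rfl
      simp only [zero_mul] at key
      exact hnum (by simpa [hq] using mul_eq_zero.mp key)
    have hd := RatFunc.denom_ne_zero f
    have h1 : f.num.natDegree + q.natDegree = p.natDegree + f.denom.natDegree := by
      rw [← Polynomial.natDegree_mul hnum hq, ← Polynomial.natDegree_mul hp hd, key]
    have h2 : p.natDegree ≤ q.natDegree := Polynomial.natDegree_le_natDegree hdeg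
    have h3 : f.num.natDegree ≤ f.denom.natDegree := by omega
    rw [Polynomial.degree_eq_natDegree hnum, Polynomial.degree_eq_natDegree hd]
    exact_mod_cast h3


set_option synthInstance.maxHeartbeats 1000000
set_option maxHeartbeats 2000000

variable {m : ℕ}

/-- matrix-level representation with common denominator and degree control -/
def good (A : Matrix (Fin m) (Fin m) (RatFunc ℂ))
    (N : Matrix (Fin m) (Fin m) (Polynomial ℂ)) (q : Polynomial ℂ) : Prop :=
  q ≠ 0 ∧ (∀ i j, (N i j).degree ≤ q.degree) ∧ ∀ i j, rp (A i j) (N i j) q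

lemma good_one : good (1 : Matrix (Fin m) (Fin m) (RatFunc ℂ)) 1 1 := by
  refine ⟨one_ne_zero, fun i j => ?_, fun i j => ?_⟩
  · by_cases h : i = j <;> simp [Matrix.one_apply, h]
  · unfold rp
    by_cases h : i = j <;> simp [Matrix.one_apply, h]

lemma good_mul {A B : Matrix (Fin m) (Fin m) (RatFunc ℂ)} {N N' q q'}
    (hA : good A N q) (hB : good B N' q') : good (A * B) (N * N') (q * q') := by
  obtain ⟨hq, hdA, hrA⟩ := hA
  obtain ⟨hq', hdB, hrB⟩ := hB
  refine ⟨mul_ne_zero hq hq', fun i j => ?_, fun i j => ?_⟩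
  · rw [Matrix.mul_apply, Polynomial.degree_mul]
    refine le_trans (Polynomial.degree_sum_le _ _) (Finset.sup_le fun k _ => ?_)
    rw [Polynomial.degree_mul]
    exact add_le_add (hdA i k) (hdB k j)
  · unfold rp
    simp only [Matrix.mul_apply, _root_.map_mul, Finset.mul_sum]
    rw [map_sum (algebraMap (Polynomial ℂ) (RatFunc ℂ))]
    refine Finset.sum_congr rfl fun k _ => ?_
    calc algebraMap (Polynomial ℂ) (RatFunc ℂ) q * algebraMap (Polynomial ℂ) (RatFunc ℂ) q' *
          (A i k * B k j)
        = (algebraMap (Polynomial ℂ) (RatFunc ℂ) q * A i k) *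
          (algebraMap (Polynomial ℂ) (RatFunc ℂ) q' * B k j) := by ring
      _ = _ := by rw [hrA i k, hrB k j, _root_.map_mul]

lemma good_add {A B : Matrix (Fin m) (Fin m) (RatFunc ℂ)} {N N' q q'}
    (hA : good A N q) (hB : good B N' q') :
    good (A + B) (q' • N + q • N') (q * q') := by
  obtain ⟨hq, hdA, hrA⟩ := hA
  obtain ⟨hq', hdB, hrB⟩ := hB
  refine ⟨mul_ne_zero hq hq', fun i j => ?_, fun i j => ?_⟩
  · refine le_trans (Polynomial.degree_add_le _ _) (max_le ?_ ?_) <;>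
      simp only [Matrix.add_apply, Matrix.smul_apply, smul_eq_mul, Polynomial.degree_mul,
        Polynomial.degree_mul]
    · calc (q' * N i j).degree = q'.degree + (N i j).degree := Polynomial.degree_mul
        _ ≤ q'.degree + q.degree := add_le_add_right (hdA i j) _
        _ = q.degree + q'.degree := add_comm _ _
    · exact (Polynomial.degree_mul (p := q) (q := N' i j)).trans_le (add_le_add_right (hdB i j) _)
  · unfold rp
    simp only [Matrix.add_apply, Matrix.smul_apply, smul_eq_mul, _root_.map_mul, _root_.map_add]
    rw [mul_add]
    congr 1
    · calc algebraMap (Polynomial ℂ) (RatFunc ℂ) q * algebraMap (Polynomial ℂ) (RatFunc ℂ) q' *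
            A i j
          = algebraMap (Polynomial ℂ) (RatFunc ℂ) q' *
            (algebraMap (Polynomial ℂ) (RatFunc ℂ) q * A i j) := by ring
        _ = _ := by rw [hrA i j]
    · calc algebraMap (Polynomial ℂ) (RatFunc ℂ) q * algebraMap (Polynomial ℂ) (RatFunc ℂ) q' *
            B i j
          = algebraMap (Polynomial ℂ) (RatFunc ℂ) q *
            (algebraMap (Polynomial ℂ) (RatFunc ℂ) q' * B i j) := by ring
        _ = _ := by rw [hrB i j]

lemma good_neg {A : Matrix (Fin m) (Fin m) (RatFunc ℂ)} {N q}
    (hA : good A N q) : good (-A) (-N) q := by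
  obtain ⟨hq, hd, hr⟩ := hA
  refine ⟨hq, fun i j => by simpa using hd i j, fun i j => ?_⟩
  unfold rp
  simp only [Matrix.neg_apply, _root_.map_neg, mul_neg]
  rw [hr i j]

/-- smul by a represented scalar -/
lemma good_smul {A : Matrix (Fin m) (Fin m) (RatFunc ℂ)} {N q} {f : RatFunc ℂ} {p r}
    (hf : rp f p r) (hr : r ≠ 0) (hdeg : p.degree ≤ r.degree)
    (hA : good A N q) : good (f • A) (p • N) (r * q) := by
  obtain ⟨hq, hd, hrp⟩ := hA
  refine ⟨mul_ne_zero hr hq, fun i j => ?_, fun i j => ?_⟩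
  · simp only [Matrix.smul_apply, smul_eq_mul, Polynomial.degree_mul]
    exact add_le_add hdeg (hd i j)
  · unfold rp
    simp only [Matrix.smul_apply, smul_eq_mul, _root_.map_mul]
    calc algebraMap (Polynomial ℂ) (RatFunc ℂ) r * algebraMap (Polynomial ℂ) (RatFunc ℂ) q *
          (f • A i j)
        = (algebraMap (Polynomial ℂ) (RatFunc ℂ) r * f) *
          (algebraMap (Polynomial ℂ) (RatFunc ℂ) q * A i j) := by
          rw [smul_eq_mul]; ring
      _ = _ := by rw [hf, hrp i j]


lemma good_sum {ι : Type} [DecidableEq ι] {u : Finset ι}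
    {E : ι → Matrix (Fin m) (Fin m) (RatFunc ℂ)}
    {NE : ι → Matrix (Fin m) (Fin m) (Polynomial ℂ)} {qE : ι → Polynomial ℂ}
    (h : ∀ j ∈ u, good (E j) (NE j) (qE j)) :
    good (∑ j ∈ u, E j) (∑ j ∈ u, (∏ l ∈ u.erase j, qE l) • NE j) (∏ j ∈ u, qE j) := by
  refine ⟨Finset.prod_ne_zero_iff.2 fun j hj => (h j hj).1, fun i j => ?_, fun i j => ?_⟩
  · simp only [Matrix.sum_apply, Matrix.smul_apply, smul_eq_mul]
    refine le_trans (Polynomial.degree_sum_le _ _) (Finset.sup_le fun k hk => ?_)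
    rw [Polynomial.degree_mul, ← Finset.mul_prod_erase u qE hk, Polynomial.degree_mul]
    calc (∏ l ∈ u.erase k, qE l).degree + ((NE k) i j).degree
        ≤ (∏ l ∈ u.erase k, qE l).degree + (qE k).degree :=
          add_le_add_right ((h k hk).2.1 i j) _
      _ = (qE k).degree + (∏ l ∈ u.erase k, qE l).degree := add_comm _ _
  · unfold rp
    simp only [Matrix.sum_apply, Matrix.smul_apply, smul_eq_mul, Finset.mul_sum]
    rw [map_sum (algebraMap (Polynomial ℂ) (RatFunc ℂ))]
    refine Finset.sum_congr rfl fun k hk => ?_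
    rw [← Finset.mul_prod_erase u qE hk, _root_.map_mul, _root_.map_mul]
    calc algebraMap (Polynomial ℂ) (RatFunc ℂ) (qE k) *
          algebraMap (Polynomial ℂ) (RatFunc ℂ) (∏ l ∈ u.erase k, qE l) * E k i j
        = algebraMap (Polynomial ℂ) (RatFunc ℂ) (∏ l ∈ u.erase k, qE l) *
          (algebraMap (Polynomial ℂ) (RatFunc ℂ) (qE k) * E k i j) := by ring
      _ = _ := by rw [(h k hk).2.2 i j]

lemma good_eval {A : Matrix (Fin m) (Fin m) (RatFunc ℂ)} {N q} {s : ℂ}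
    (h : good A N q) (hs : q.eval s ≠ 0) :
    A.map (RatFunc.eval (RingHom.id ℂ) s) = (q.eval s)⁻¹ • N.map (fun p => p.eval s) := by
  ext i j
  simp only [Matrix.map_apply, Matrix.smul_apply, smul_eq_mul]
  rw [(h.2.2 i j).eval hs, div_eq_inv_mul]

lemma mapeval_mul {N N' : Matrix (Fin m) (Fin m) (Polynomial ℂ)} {s : ℂ} :
    (N * N').map (fun p => p.eval s)
      = N.map (fun p => p.eval s) * N'.map (fun p => p.eval s) := by
  ext i j
  simp [Matrix.mul_apply, Matrix.map_apply, Polynomial.eval_finset_sum]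

lemma evalM_mul {A B : Matrix (Fin m) (Fin m) (RatFunc ℂ)} {N N' q q'} {s : ℂ}
    (hA : good A N q) (hB : good B N' q') (hqs : q.eval s ≠ 0) (hq's : q'.eval s ≠ 0) :
    (A * B).map (RatFunc.eval (RingHom.id ℂ) s)
      = A.map (RatFunc.eval (RingHom.id ℂ) s) * B.map (RatFunc.eval (RingHom.id ℂ) s) := by
  rw [good_eval (good_mul hA hB) (by simp [Polynomial.eval_mul, hqs, hq's]),
    good_eval hA hqs, good_eval hB hq's, mapeval_mul, Matrix.smul_mul, Matrix.mul_smul,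
    smul_smul, Polynomial.eval_mul, mul_inv]

lemma rp.denom_eval_ne {f : RatFunc ℂ} {p q : Polynomial ℂ} {s : ℂ} (h : rp f p q)
    (hs : q.eval s ≠ 0) : f.denom.eval s ≠ 0 := by
  obtain ⟨c, hc⟩ := h.denom_dvd
  exact fun h0 => hs (by rw [hc, Polynomial.eval_mul, h0, zero_mul])

lemma evalM_add {A B : Matrix (Fin m) (Fin m) (RatFunc ℂ)}
    {N N' : Matrix (Fin m) (Fin m) (Polynomial ℂ)} {q q' : Polynomial ℂ} {s : ℂ}
    (hA : ∀ i j, rp (A i j) (N i j) q) (hB : ∀ i j, rp (B i j) (N' i j) q')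
    (hqs : q.eval s ≠ 0) (hq's : q'.eval s ≠ 0) :
    (A + B).map (RatFunc.eval (RingHom.id ℂ) s)
      = A.map (RatFunc.eval (RingHom.id ℂ) s) + B.map (RatFunc.eval (RingHom.id ℂ) s) := by
  ext i j
  simp only [Matrix.map_apply, Matrix.add_apply]
  have h1 : Polynomial.eval₂ (RingHom.id ℂ) s (A i j).denom ≠ 0 := (hA i j).denom_eval_ne hqs
  have h2 : Polynomial.eval₂ (RingHom.id ℂ) s (B i j).denom ≠ 0 := (hB i j).denom_eval_ne hq's
  exact RatFunc.eval_add (f := RingHom.id ℂ) (a := s) h1 h2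


lemma good_ofFn_rev_prod :
    ∀ {N' : ℕ} (A : Fin N' → Matrix (Fin m) (Fin m) (RatFunc ℂ))
      (Nf : Fin N' → Matrix (Fin m) (Fin m) (Polynomial ℂ)) (q : Fin N' → Polynomial ℂ),
      (∀ k, good (A k) (Nf k) (q k)) →
      good (List.ofFn A).reverse.prod (List.ofFn Nf).reverse.prod (∏ k, q k) := by
  intro N'
  induction N' with
  | zero => intro A Nf q h; simpa using good_one
  | succ N' ih =>
    intro A Nf q h
    simp only [List.ofFn_succ, List.reverse_cons, List.prod_append, List.prod_cons,
      List.prod_nil, mul_one]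
    rw [Fin.prod_univ_succ, mul_comm (q 0)]
    exact good_mul (ih _ _ _ fun k => h k.succ) (h 0)

lemma evalM_ofFn_rev_prod {s : ℂ} :
    ∀ {N' : ℕ} (A : Fin N' → Matrix (Fin m) (Fin m) (RatFunc ℂ))
      (Nf : Fin N' → Matrix (Fin m) (Fin m) (Polynomial ℂ)) (q : Fin N' → Polynomial ℂ),
      (∀ k, good (A k) (Nf k) (q k)) → (∀ k, (q k).eval s ≠ 0) →
      ((List.ofFn A).reverse.prod).map (RatFunc.eval (RingHom.id ℂ) s)
        = (List.ofFn fun k => (A k).map (RatFunc.eval (RingHom.id ℂ) s)).reverse.prod := by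
  intro N'
  induction N' with
  | zero =>
    intro A Nf q h hs
    simpa using Matrix.map_one (RatFunc.eval (RingHom.id ℂ) s) RatFunc.eval_zero RatFunc.eval_one
  | succ N' ih =>
    intro A Nf q h hs
    simp only [List.ofFn_succ, List.reverse_cons, List.prod_append, List.prod_cons,
      List.prod_nil, mul_one]
    have hts : (∏ k : Fin N', q k.succ).eval s ≠ 0 := by
      rw [Polynomial.eval_prod]
      exact Finset.prod_ne_zero_iff.2 fun k _ => hs k.succ
    rw [evalM_mul (good_ofFn_rev_prod _ _ _ fun k => h k.succ) (h 0) hts (hs 0),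
      ih _ _ _ (fun k => h k.succ) (fun k => hs k.succ)]

/-! Blaschke-specific material -/

noncomputable def Pmat (m : ℕ) (η : Fin m → ℂ) : Matrix (Fin m) (Fin m) ℂ :=
  Matrix.vecMulVec η fun i => starRingEnd ℂ (η i)

lemma Pmat_idem {η : Fin m → ℂ} (hη : ∑ i, starRingEnd ℂ (η i) * η i = 1) :
    Pmat m η * Pmat m η = Pmat m η := by
  ext i j
  simp only [Pmat, Matrix.mul_apply, Matrix.vecMulVec_apply]
  calc ∑ k, η i * starRingEnd ℂ (η k) * (η k * starRingEnd ℂ (η j))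
      = (∑ k, starRingEnd ℂ (η k) * η k) * (η i * starRingEnd ℂ (η j)) := by
        rw [Finset.sum_mul]
        exact Finset.sum_congr rfl fun k _ => by ring
    _ = η i * starRingEnd ℂ (η j) := by rw [hη, one_mul]

lemma one_add_smul_mul {P : Matrix (Fin m) (Fin m) ℂ} (hP : P * P = P) (x y : ℂ) :
    (1 + x • P) * (1 + y • P) = 1 + (x + y + x * y) • P := by
  simp only [mul_add, add_mul, one_mul, mul_one, Matrix.smul_mul, Matrix.mul_smul,
    smul_smul, hP, add_smul]
  abel_nf
  rw [mul_comm y x]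

noncomputable def bVal (m : ℕ) (z : ℂ) (η : Fin m → ℂ) (w : ℂ) : Matrix (Fin m) (Fin m) ℂ :=
  1 + ((2 * (z.re : ℂ)) / (w - z)) • Pmat m η

lemma blaschke_coeff {z w : ℂ} (hwz : w ≠ z) (hw : w + starRingEnd ℂ z ≠ 0) :
    -((2 * (z.re : ℂ)) / (w + starRingEnd ℂ z)) + (2 * (z.re : ℂ)) / (w - z) +
      -((2 * (z.re : ℂ)) / (w + starRingEnd ℂ z)) * ((2 * (z.re : ℂ)) / (w - z)) = 0 := by
  have h1 : w - z ≠ 0 := sub_ne_zero.mpr hwz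
  have hcz : (z : ℂ) + starRingEnd ℂ z = 2 * (z.re : ℂ) := by
    rw [Complex.add_conj]; push_cast; ring
  field_simp
  linear_combination (2 * (z.re : ℂ)) * hcz

lemma blaschkeFactor_eq {z w : ℂ} {η : Fin m → ℂ} :
    blaschkeFactor m z η w = 1 + (-((2 * (z.re : ℂ)) / (w + starRingEnd ℂ z))) • Pmat m η := by
  rw [blaschkeFactor, sub_eq_add_neg, ← neg_smul]; rfl

lemma blaschke_mul_bVal {z w : ℂ} {η : Fin m → ℂ}
    (hη : ∑ i, starRingEnd ℂ (η i) * η i = 1)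
    (hwz : w ≠ z) (hw : w + starRingEnd ℂ z ≠ 0) :
    blaschkeFactor m z η w * bVal m z η w = 1 := by
  rw [blaschkeFactor_eq, bVal, one_add_smul_mul (Pmat_idem hη), blaschke_coeff hwz hw]
  simp

lemma bVal_mul_blaschke {z w : ℂ} {η : Fin m → ℂ}
    (hη : ∑ i, starRingEnd ℂ (η i) * η i = 1)
    (hwz : w ≠ z) (hw : w + starRingEnd ℂ z ≠ 0) :
    bVal m z η w * blaschkeFactor m z η w = 1 := by
  rw [blaschkeFactor_eq, bVal, one_add_smul_mul (Pmat_idem hη)]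
  have := blaschke_coeff hwz hw
  have h2 : (2 * (z.re : ℂ)) / (w - z) + -((2 * (z.re : ℂ)) / (w + starRingEnd ℂ z)) +
      (2 * (z.re : ℂ)) / (w - z) * -((2 * (z.re : ℂ)) / (w + starRingEnd ℂ z)) = 0 := by
    linear_combination this
  rw [h2]
  simp

lemma blaschke_inv_eq {z w : ℂ} {η : Fin m → ℂ}
    (hη : ∑ i, starRingEnd ℂ (η i) * η i = 1)
    (hwz : w ≠ z) (hw : w + starRingEnd ℂ z ≠ 0) :
    (blaschkeFactor m z η w)⁻¹ = bVal m z η w :=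
  Matrix.inv_eq_right_inv (blaschke_mul_bVal hη hwz hw)

/-- rational inverse Blaschke factor -/
noncomputable def bInv (m : ℕ) (z : ℂ) (η : Fin m → ℂ) : Matrix (Fin m) (Fin m) (RatFunc ℂ) :=
  1 + ((RatFunc.X - RatFunc.C z)⁻¹ * RatFunc.C (2 * (z.re : ℂ))) • (Pmat m η).map RatFunc.C

noncomputable def bInvN (m : ℕ) (z : ℂ) (η : Fin m → ℂ) : Matrix (Fin m) (Fin m) (Polynomial ℂ) :=
  (Polynomial.X - Polynomial.C z) • (1 : Matrix (Fin m) (Fin m) (Polynomial ℂ)) +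
    Polynomial.C (2 * (z.re : ℂ)) • (Pmat m η).map Polynomial.C

lemma algebraMap_XsubC (z : ℂ) :
    algebraMap (Polynomial ℂ) (RatFunc ℂ) (Polynomial.X - Polynomial.C z)
      = RatFunc.X - RatFunc.C z := by
  rw [map_sub, RatFunc.algebraMap_X, RatFunc.algebraMap_C]

lemma XsubC_ne (z : ℂ) : (RatFunc.X - RatFunc.C z) ≠ 0 := by
  rw [← algebraMap_XsubC]
  exact RatFunc.algebraMap_ne_zero (Polynomial.X_sub_C_ne_zero z)

lemma good_bInv (z : ℂ) (η : Fin m → ℂ) :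
    good (bInv m z η) (bInvN m z η) (Polynomial.X - Polynomial.C z) := by
  refine ⟨Polynomial.X_sub_C_ne_zero z, fun i j => ?_, fun i j => ?_⟩
  · simp only [bInvN, Matrix.add_apply, Matrix.smul_apply, smul_eq_mul, Matrix.map_apply]
    refine le_trans (Polynomial.degree_add_le _ _) (max_le ?_ ?_)
    · by_cases h : i = j
      · subst h
        simp [Matrix.one_apply_eq, Polynomial.degree_X_sub_C]
      · simp [Matrix.one_apply_ne h]
    · refine le_trans (Polynomial.degree_mul_le _ _) ?_
      rw [Polynomial.degree_X_sub_C]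
      have := Polynomial.degree_C_le (a := (2 * (z.re : ℂ)))
      have h2 := Polynomial.degree_C_le (a := Pmat m η i j)
      calc (Polynomial.C (2 * (z.re : ℂ))).degree + (Polynomial.C (Pmat m η i j)).degree
          ≤ 0 + 0 := add_le_add this h2
        _ ≤ 1 := by norm_num
  · unfold rp
    simp only [bInv, bInvN, Matrix.add_apply, Matrix.smul_apply, smul_eq_mul,
      Matrix.map_apply, _root_.map_add, _root_.map_mul, algebraMap_XsubC,
      RatFunc.algebraMap_C]
    by_cases h : i = j
    · subst h
      simp only [Matrix.one_apply_eq, _root_.map_one]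
      field_simp [XsubC_ne z]
    · simp only [Matrix.one_apply_ne h, _root_.map_zero]
      field_simp [XsubC_ne z]

lemma eval_bInv {z : ℂ} {η : Fin m → ℂ} {s : ℂ} (hsz : s ≠ z) :
    (bInv m z η).map (RatFunc.eval (RingHom.id ℂ) s) = bVal m z η s := by
  have hs : (Polynomial.X - Polynomial.C z).eval s ≠ 0 := by
    simp [sub_ne_zero.mpr hsz]
  rw [good_eval (good_bInv z η) hs]
  ext i j
  simp only [bInvN, bVal, Matrix.smul_apply, Matrix.map_apply, Matrix.add_apply,
    smul_eq_mul, Polynomial.eval_add, Polynomial.eval_mul, Polynomial.eval_sub,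
    Polynomial.eval_X, Polynomial.eval_C]
  have h1 : s - z ≠ 0 := sub_ne_zero.mpr hsz
  by_cases h : i = j
  · subst h
    simp only [Matrix.one_apply_eq]
    rw [Polynomial.eval_one]
    field_simp
  · simp only [Matrix.one_apply_ne h]
    rw [Polynomial.eval_zero]
    field_simp

lemma rp_self (f : RatFunc ℂ) : rp f f.num f.denom := by
  unfold rp
  rw [mul_comm]
  exact ((div_eq_iff (RatFunc.algebraMap_ne_zero (RatFunc.denom_ne_zero f))).mp
    (RatFunc.num_div_denom f)).symm

lemma rp_C (c : ℂ) : rp (RatFunc.C c) (Polynomial.C c) 1 := by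
  unfold rp
  rw [_root_.map_one, one_mul, RatFunc.algebraMap_C]

lemma rp_inv_XsubC (w : ℂ) :
    rp ((RatFunc.X - RatFunc.C w)⁻¹) 1 (Polynomial.X - Polynomial.C w) := by
  unfold rp
  rw [algebraMap_XsubC, _root_.map_one, mul_inv_cancel₀ (XsubC_ne w)]

lemma good_mapC (R : Matrix (Fin m) (Fin m) ℂ) :
    good (R.map RatFunc.C) (R.map Polynomial.C) 1 := by
  refine ⟨one_ne_zero, fun i j => ?_, fun i j => ?_⟩
  · rw [Polynomial.degree_one]
    exact Polynomial.degree_C_le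
  · unfold rp
    simp [Matrix.map_apply, RatFunc.algebraMap_C]

lemma mapC_eval (R : Matrix (Fin m) (Fin m) ℂ) (s : ℂ) :
    (R.map RatFunc.C).map (RatFunc.eval (RingHom.id ℂ) s) = R := by
  ext i j
  simp [Matrix.map_apply, RatFunc.eval_C]

lemma good_of_proper (Y : Matrix (Fin m) (Fin m) (RatFunc ℂ))
    (hY : ∀ i j, (Y i j).num.degree ≤ (Y i j).denom.degree) :
    good Y
      (Matrix.of fun i j =>
        (Y i j).num * ∏ p ∈ Finset.univ.erase (i, j), (Y p.1 p.2).denom)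
      (∏ p : Fin m × Fin m, (Y p.1 p.2).denom) := by
  refine ⟨Finset.prod_ne_zero_iff.2 fun p _ => RatFunc.denom_ne_zero _,
    fun i j => ?_, fun i j => ?_⟩
  · rw [← Finset.mul_prod_erase Finset.univ _ (Finset.mem_univ (i, j))]
    simp only [Matrix.of_apply, Polynomial.degree_mul]
    exact add_le_add_left (hY i j) _
  · unfold rp
    rw [← Finset.mul_prod_erase Finset.univ _ (Finset.mem_univ (i, j))]
    simp only [Matrix.of_apply, _root_.map_mul]
    calc algebraMap (Polynomial ℂ) (RatFunc ℂ) (Y i j).denom *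
          algebraMap (Polynomial ℂ) (RatFunc ℂ)
            (∏ p ∈ Finset.univ.erase (i, j), (Y p.1 p.2).denom) * Y i j
        = (algebraMap (Polynomial ℂ) (RatFunc ℂ) (Y i j).denom * Y i j) *
          algebraMap (Polynomial ℂ) (RatFunc ℂ)
            (∏ p ∈ Finset.univ.erase (i, j), (Y p.1 p.2).denom) := by ring
      _ = _ := by rw [rp_self (Y i j)]

lemma rp_removable {f : RatFunc ℂ} {p q : Polynomial ℂ} {w : ℂ} (h : rp f p q)
    (hp : p.eval w = 0) :
    rp ((RatFunc.X - RatFunc.C w)⁻¹ * f) (p /ₘ (Polynomial.X - Polynomial.C w)) q := by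
  have hroot : (Polynomial.X - Polynomial.C w) * (p /ₘ (Polynomial.X - Polynomial.C w)) = p :=
    Polynomial.mul_divByMonic_eq_iff_isRoot.2 hp
  unfold rp at h ⊢
  calc algebraMap (Polynomial ℂ) (RatFunc ℂ) q * ((RatFunc.X - RatFunc.C w)⁻¹ * f)
      = (RatFunc.X - RatFunc.C w)⁻¹ *
        (algebraMap (Polynomial ℂ) (RatFunc ℂ) q * f) := by ring
    _ = (RatFunc.X - RatFunc.C w)⁻¹ * algebraMap (Polynomial ℂ) (RatFunc ℂ) p := by rw [h]
    _ = (RatFunc.X - RatFunc.C w)⁻¹ * ((RatFunc.X - RatFunc.C w) *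
          algebraMap (Polynomial ℂ) (RatFunc ℂ) (p /ₘ (Polynomial.X - Polynomial.C w))) := by
        rw [← algebraMap_XsubC, ← _root_.map_mul, hroot]
    _ = _ := by
        rw [inv_mul_cancel_left₀ (XsubC_ne w)]

lemma good_removable {A : Matrix (Fin m) (Fin m) (RatFunc ℂ)} {N : Matrix (Fin m) (Fin m) (Polynomial ℂ)}
    {q : Polynomial ℂ} {w : ℂ} (h : good A N q)
    (hN : ∀ i j, (N i j).eval w = 0) :
    good ((RatFunc.X - RatFunc.C w)⁻¹ • A)
      (Matrix.of fun i j => N i j /ₘ (Polynomial.X - Polynomial.C w)) q := by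
  refine ⟨h.1, fun i j => ?_, fun i j => ?_⟩
  · exact le_trans (Polynomial.degree_divByMonic_le _ _) (h.2.1 i j)
  · have := rp_removable (h.2.2 i j) (hN i j)
    simpa [Matrix.smul_apply, smul_eq_mul, Matrix.of_apply] using this

lemma good_ite {A : Matrix (Fin m) (Fin m) (RatFunc ℂ)} {N q} (c : Prop) [Decidable c]
    (h : good A N q) :
    good (if c then A else 1) (if c then N else 1) (if c then q else 1) := by
  split
  · exact h
  · exact good_one

lemma evalM_smul_C {A : Matrix (Fin m) (Fin m) (RatFunc ℂ)}
    {N : Matrix (Fin m) (Fin m) (Polynomial ℂ)} {q : Polynomial ℂ} {s : ℂ} (c : ℂ)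
    (hA : good A N q) (hqs : q.eval s ≠ 0) :
    (RatFunc.C c • A).map (RatFunc.eval (RingHom.id ℂ) s)
      = c • A.map (RatFunc.eval (RingHom.id ℂ) s) := by
  have hdeg : (Polynomial.C c).degree ≤ (1 : Polynomial ℂ).degree := by
    rw [Polynomial.degree_one]; exact Polynomial.degree_C_le
  have h1 : good (RatFunc.C c • A) (Polynomial.C c • N) (1 * q) :=
    good_smul (rp_C c) one_ne_zero hdeg hA
  rw [good_eval h1 (by simpa using hqs), good_eval hA hqs]
  ext i j
  simp only [Matrix.smul_apply, Matrix.map_apply, smul_eq_mul, Polynomial.eval_mul,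
    Polynomial.eval_one, Polynomial.eval_C, one_mul]
  ring

lemma evalM_sum {ι : Type} [DecidableEq ι] {u : Finset ι}
    {E : ι → Matrix (Fin m) (Fin m) (RatFunc ℂ)}
    {NE : ι → Matrix (Fin m) (Fin m) (Polynomial ℂ)} {qE : ι → Polynomial ℂ} {s : ℂ}
    (h : ∀ j ∈ u, good (E j) (NE j) (qE j)) (hs : ∀ j ∈ u, (qE j).eval s ≠ 0) :
    (∑ j ∈ u, E j).map (RatFunc.eval (RingHom.id ℂ) s)
      = ∑ j ∈ u, (E j).map (RatFunc.eval (RingHom.id ℂ) s) := by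
  induction u using Finset.induction_on with
  | empty =>
    simp only [Finset.sum_empty]
    exact Matrix.map_zero _ (RatFunc.eval_zero _ _)
  | insert _ _ hni ih =>
    rename_i a u'
    rw [Finset.sum_insert hni, Finset.sum_insert hni]
    have hgs : good (∑ j ∈ u', E j)
        (∑ j ∈ u', (∏ l ∈ u'.erase j, qE l) • NE j) (∏ j ∈ u', qE j) :=
      good_sum fun j hj => h j (Finset.mem_insert_of_mem hj)
    have hqs : (∏ j ∈ u', qE j).eval s ≠ 0 := by
      rw [Polynomial.eval_prod]
      exact Finset.prod_ne_zero_iff.2 fun j hj => hs j (Finset.mem_insert_of_mem hj)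
    rw [evalM_add (h a (Finset.mem_insert_self a u')).2.2 hgs.2.2
      (hs a (Finset.mem_insert_self a u')) hqs,
      ih (fun j hj => h j (Finset.mem_insert_of_mem hj))
        (fun j hj => hs j (Finset.mem_insert_of_mem hj))]

/-! The candidate matrix T and its witnesses -/

variable (n : ℕ) (z : Fin n → ℂ) (η : Fin n → Fin m → ℂ)
variable (Y : Matrix (Fin m) (Fin m) (RatFunc ℂ))

noncomputable def LinvD : Matrix (Fin m) (Fin m) (RatFunc ℂ) :=
  (List.ofFn fun k => bInv m (z k) (η k)).reverse.prod

noncomputable def NLD : Matrix (Fin m) (Fin m) (Polynomial ℂ) :=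
  (List.ofFn fun k => bInvN m (z k) (η k)).reverse.prod

noncomputable def qLD : Polynomial ℂ := ∏ k, (Polynomial.X - Polynomial.C (z k))

noncomputable def NYD : Matrix (Fin m) (Fin m) (Polynomial ℂ) :=
  Matrix.of fun i j => (Y i j).num * ∏ p ∈ Finset.univ.erase (i, j), (Y p.1 p.2).denom

noncomputable def qYD : Polynomial ℂ := ∏ p : Fin m × Fin m, (Y p.1 p.2).denom

noncomputable def DmD (j : Fin n) : Matrix (Fin m) (Fin m) (RatFunc ℂ) :=
  (RatFunc.X - RatFunc.C (z j))⁻¹ • ((residueMatrix m n z η Y j).map RatFunc.C)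

noncomputable def NDD (j : Fin n) : Matrix (Fin m) (Fin m) (Polynomial ℂ) :=
  (1 : Polynomial ℂ) • ((residueMatrix m n z η Y j).map Polynomial.C)

noncomputable def qDD (j : Fin n) : Polynomial ℂ := (Polynomial.X - Polynomial.C (z j)) * 1

noncomputable def SDD : Matrix (Fin m) (Fin m) (RatFunc ℂ) := ∑ j, DmD n z η Y j

noncomputable def NSDD : Matrix (Fin m) (Fin m) (Polynomial ℂ) :=
  ∑ j, (∏ l ∈ Finset.univ.erase j, qDD n z l) • NDD n z η Y j

noncomputable def qSDD : Polynomial ℂ := ∏ j, qDD n z j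

noncomputable def TT : Matrix (Fin m) (Fin m) (RatFunc ℂ) :=
  LinvD n z η * Y + -SDD n z η Y

noncomputable def NTD : Matrix (Fin m) (Fin m) (Polynomial ℂ) :=
  qSDD n z • (NLD n z η * NYD Y) + (qLD n z * qYD Y) • -NSDD n z η Y

noncomputable def qTD : Polynomial ℂ := qLD n z * qYD Y * qSDD n z

lemma good_Dm (j : Fin n) : good (DmD n z η Y j) (NDD n z η Y j) (qDD n z j) := by
  refine good_smul (rp_inv_XsubC (z j)) (Polynomial.X_sub_C_ne_zero (z j)) ?_ (good_mapC _)
  rw [Polynomial.degree_one, Polynomial.degree_X_sub_C]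
  norm_num

lemma good_SD : good (SDD n z η Y) (NSDD n z η Y) (qSDD n z) :=
  good_sum fun j _ => good_Dm n z η Y j

lemma good_TT (hY_proper : ∀ i j, (Y i j).num.degree ≤ (Y i j).denom.degree) :
    good (TT n z η Y) (NTD n z η Y) (qTD n z Y) :=
  good_add
    (good_mul (good_ofFn_rev_prod _ _ _ fun k => good_bInv (z k) (η k))
      (good_of_proper Y hY_proper))
    (good_neg (good_SD n z η Y))

lemma denom_TT_ne (hz : ∀ i, 0 < (z i).re) (hdist : Function.Injective z)
    (hη : ∀ k, ∑ i, starRingEnd ℂ (η k i) * η k i = 1)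
    (hY_proper : ∀ i j, (Y i j).num.degree ≤ (Y i j).denom.degree)
    (hY_stable : ∀ i j, ∀ x : ℂ, Polynomial.eval x (Y i j).denom = 0 → x.re < 0)
    (i₀ : Fin n) :
    ∀ i j, ((TT n z η Y i j).denom).eval (z i₀) ≠ 0 := by
  classical
  have hzz : ∀ l : Fin n, l ≠ i₀ → z i₀ - z l ≠ 0 := fun l hl =>
    sub_ne_zero.mpr fun h => hl (hdist h).symm
  have hqY : (qYD Y).eval (z i₀) ≠ 0 := by
    intro h0
    rw [qYD, Polynomial.eval_prod] at h0
    obtain ⟨p, _, hp⟩ := Finset.prod_eq_zero_iff.1 h0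
    exact absurd (hY_stable p.1 p.2 _ hp) (not_lt.2 (le_of_lt (hz i₀)))
  have hre_sum : ∀ a b : Fin n, z a + starRingEnd ℂ (z b) ≠ 0 := by
    intro a b h0
    have h1 : (z a + starRingEnd ℂ (z b)).re = 0 := by rw [h0]; simp
    rw [Complex.add_re, Complex.conj_re] at h1
    linarith [hz a, hz b]
  set A := (List.ofFn fun l => if i₀ < l then bInv m (z l) (η l) else 1).reverse.prod with hAdef
  set NA := (List.ofFn fun l => if i₀ < l then bInvN m (z l) (η l) else 1).reverse.prod with hNAdef
  set qA := ∏ l, (if i₀ < l then Polynomial.X - Polynomial.C (z l) else 1) with hqAdef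
  have hAg : good A NA qA := by
    rw [hAdef, hNAdef, hqAdef]
    exact good_ofFn_rev_prod _ _ _ fun l => good_ite _ (good_bInv _ _)
  set B := (List.ofFn fun l => if l < i₀ then bInv m (z l) (η l) else 1).reverse.prod with hBdef
  set NB := (List.ofFn fun l => if l < i₀ then bInvN m (z l) (η l) else 1).reverse.prod with hNBdef
  set qB := ∏ l, (if l < i₀ then Polynomial.X - Polynomial.C (z l) else 1) with hqBdef
  have hBg : good B NB qB := by
    rw [hBdef, hNBdef, hqBdef]
    exact good_ofFn_rev_prod _ _ _ fun l => good_ite _ (good_bInv _ _)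
  have hqA : qA.eval (z i₀) ≠ 0 := by
    rw [hqAdef, Polynomial.eval_prod]
    refine Finset.prod_ne_zero_iff.2 fun l _ => ?_
    split
    · next hl =>
      simp only [Polynomial.eval_sub, Polynomial.eval_X, Polynomial.eval_C]
      exact hzz l (ne_of_lt hl).symm
    · simp
  have hqB : qB.eval (z i₀) ≠ 0 := by
    rw [hqBdef, Polynomial.eval_prod]
    refine Finset.prod_ne_zero_iff.2 fun l _ => ?_
    split
    · next hl =>
      simp only [Polynomial.eval_sub, Polynomial.eval_X, Polynomial.eval_C]
      exact hzz l (ne_of_lt hl)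
    · simp
  set M := A * (Pmat m (η i₀)).map RatFunc.C * B * Y with hMdef
  set NM := NA * (Pmat m (η i₀)).map Polynomial.C * NB * NYD Y with hNMdef
  set qM := qA * 1 * qB * qYD Y with hqMdef
  have hMg : good M NM qM := by
    rw [hMdef, hNMdef, hqMdef]
    exact good_mul (good_mul (good_mul hAg (good_mapC _)) hBg) (good_of_proper Y hY_proper)
  have hqM : qM.eval (z i₀) ≠ 0 := by
    rw [hqMdef]
    simp only [Polynomial.eval_mul, Polynomial.eval_one, mul_one]
    exact mul_ne_zero (mul_ne_zero hqA hqB) hqY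
  have hsplit : LinvD n z η = A * bInv m (z i₀) (η i₀) * B := by
    rw [hAdef, hBdef, LinvD]
    exact ofFn_rev_prod_split _ i₀
  have hLY : LinvD n z η * Y
      = A * B * Y + ((RatFunc.X - RatFunc.C (z i₀))⁻¹ *
          RatFunc.C (2 * ((z i₀).re : ℂ))) • M := by
    rw [hsplit, hMdef, bInv]
    simp only [mul_add, add_mul, mul_one, one_mul, Matrix.mul_smul, Matrix.smul_mul]
  -- evaluation of the partial products at z i₀
  have hitene : ∀ l : Fin n,
      ((if i₀ < l then Polynomial.X - Polynomial.C (z l) else 1)).eval (z i₀) ≠ 0 := by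
    intro l
    split
    · next hl =>
      simp only [Polynomial.eval_sub, Polynomial.eval_X, Polynomial.eval_C]
      exact hzz l (ne_of_lt hl).symm
    · simp
  have hitene' : ∀ l : Fin n,
      ((if l < i₀ then Polynomial.X - Polynomial.C (z l) else 1)).eval (z i₀) ≠ 0 := by
    intro l
    split
    · next hl =>
      simp only [Polynomial.eval_sub, Polynomial.eval_X, Polynomial.eval_C]
      exact hzz l (ne_of_lt hl)
    · simp
  have hAval : A.map (RatFunc.eval (RingHom.id ℂ) (z i₀))
      = (List.ofFn fun l =>
          if i₀ < l then (blaschkeFactor m (z l) (η l) (z i₀))⁻¹ else 1).reverse.prod := by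
    rw [hAdef, evalM_ofFn_rev_prod _ _ _ (fun l => good_ite _ (good_bInv (z l) (η l))) hitene]
    refine congrArg List.prod (congrArg List.reverse (congrArg List.ofFn (funext fun l => ?_)))
    by_cases hl : i₀ < l
    · rw [if_pos hl, if_pos hl,
        eval_bInv (show z i₀ ≠ z l from fun h => (ne_of_lt hl) (hdist h)),
        blaschke_inv_eq (hη l) (fun h => (ne_of_lt hl) (hdist h)) (hre_sum i₀ l)]
    · rw [if_neg hl, if_neg hl]
      exact Matrix.map_one _ (RatFunc.eval_zero _ _) (RatFunc.eval_one _ _)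
  have hBval : B.map (RatFunc.eval (RingHom.id ℂ) (z i₀))
      = (List.ofFn fun l =>
          if l < i₀ then (blaschkeFactor m (z l) (η l) (z i₀))⁻¹ else 1).reverse.prod := by
    rw [hBdef, evalM_ofFn_rev_prod _ _ _ (fun l => good_ite _ (good_bInv (z l) (η l))) hitene']
    refine congrArg List.prod (congrArg List.reverse (congrArg List.ofFn (funext fun l => ?_)))
    by_cases hl : l < i₀
    · have hne : z i₀ ≠ z l := fun h => (ne_of_lt hl) (hdist h.symm)
      rw [if_pos hl, if_pos hl, eval_bInv hne, blaschke_inv_eq (hη l) hne (hre_sum i₀ l)]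
    · rw [if_neg hl, if_neg hl]
      exact Matrix.map_one _ (RatFunc.eval_zero _ _) (RatFunc.eval_one _ _)
  have hq1 : (qA * 1).eval (z i₀) ≠ 0 := by
    simpa using hqA
  have hq2 : (qA * 1 * qB).eval (z i₀) ≠ 0 := by
    simp only [Polynomial.eval_mul, Polynomial.eval_one, mul_one]
    exact mul_ne_zero hqA hqB
  have hMval : M.map (RatFunc.eval (RingHom.id ℂ) (z i₀))
      = ((List.ofFn fun l =>
            if i₀ < l then (blaschkeFactor m (z l) (η l) (z i₀))⁻¹ else 1).reverse.prod) *
          Pmat m (η i₀) *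
          ((List.ofFn fun l =>
            if l < i₀ then (blaschkeFactor m (z l) (η l) (z i₀))⁻¹ else 1).reverse.prod) *
          (Y.map (RatFunc.eval (RingHom.id ℂ) (z i₀))) := by
    rw [hMdef,
      evalM_mul (good_mul (good_mul hAg (good_mapC _)) hBg) (good_of_proper Y hY_proper)
        hq2 hqY,
      evalM_mul (good_mul hAg (good_mapC _)) hBg hq1 hqB,
      evalM_mul hAg (good_mapC _) hqA (by simp),
      mapC_eval, hAval, hBval]
  have hRm : (2 * ((z i₀).re : ℂ)) • (M.map (RatFunc.eval (RingHom.id ℂ) (z i₀)))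
      = residueMatrix m n z η Y i₀ := by
    rw [hMval, residueMatrix]
    simp only [Matrix.mul_smul, Matrix.smul_mul, Pmat]
  set Rm := residueMatrix m n z η Y i₀ with hRmdef
  set G := RatFunc.C (2 * ((z i₀).re : ℂ)) • M + -(Rm.map RatFunc.C) with hGdef
  set NG := (1 : Polynomial ℂ) • (Polynomial.C (2 * ((z i₀).re : ℂ)) • NM) +
      (1 * qM) • -(Rm.map Polynomial.C) with hNGdef
  have hGg : good G NG ((1 * qM) * 1) := by
    rw [hGdef, hNGdef]
    exact good_add
      (good_smul (rp_C _) one_ne_zero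
        (by rw [Polynomial.degree_one]; exact Polynomial.degree_C_le) hMg)
      (good_neg (good_mapC Rm))
  have hNM_eval : NM.map (fun p => p.eval (z i₀))
      = qM.eval (z i₀) • M.map (RatFunc.eval (RingHom.id ℂ) (z i₀)) := by
    rw [good_eval hMg hqM, smul_smul, mul_inv_cancel₀ hqM, one_smul]
  have hNGz : ∀ i j, (NG i j).eval (z i₀) = 0 := by
    intro i j
    have h1 : (NM i j).eval (z i₀)
        = qM.eval (z i₀) * (M.map (RatFunc.eval (RingHom.id ℂ) (z i₀))) i j := by
      have := congrFun (congrFun hNM_eval i) j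
      simpa [Matrix.map_apply, Matrix.smul_apply, smul_eq_mul] using this
    have h2 : (2 * ((z i₀).re : ℂ)) * ((M.map (RatFunc.eval (RingHom.id ℂ) (z i₀))) i j)
        = Rm i j := by
      have := congrFun (congrFun hRm i) j
      simpa [Matrix.smul_apply, smul_eq_mul] using this
    rw [hNGdef]
    simp only [Matrix.add_apply, Matrix.smul_apply, Matrix.neg_apply, Matrix.map_apply,
      smul_eq_mul, Polynomial.eval_add, Polynomial.eval_mul, Polynomial.eval_one,
      Polynomial.eval_neg, Polynomial.eval_C, one_mul]
    rw [h1]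
    linear_combination (qM.eval (z i₀)) * h2
  have hTsplit : TT n z η Y = (A * B * Y) + (RatFunc.X - RatFunc.C (z i₀))⁻¹ • G +
      (-∑ j ∈ Finset.univ.erase i₀, DmD n z η Y j) := by
    have hSD : SDD n z η Y = DmD n z η Y i₀ + ∑ j ∈ Finset.univ.erase i₀, DmD n z η Y j :=
      (Finset.add_sum_erase _ _ (Finset.mem_univ i₀)).symm
    rw [TT, hLY, hSD, hGdef]
    have hDi : DmD n z η Y i₀
        = (RatFunc.X - RatFunc.C (z i₀))⁻¹ • (Rm.map RatFunc.C) := rfl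
    rw [hDi, smul_add, ← smul_smul, smul_neg]
    abel
  have hU : good (A * B * Y) ((NA * NB) * NYD Y) ((qA * qB) * qYD Y) :=
    good_mul (good_mul hAg hBg) (good_of_proper Y hY_proper)
  have hV : good ((RatFunc.X - RatFunc.C (z i₀))⁻¹ • G)
      (Matrix.of fun i j => NG i j /ₘ (Polynomial.X - Polynomial.C (z i₀))) ((1 * qM) * 1) :=
    good_removable hGg hNGz
  have hW := good_neg (good_sum fun j (_ : j ∈ Finset.univ.erase i₀) => good_Dm n z η Y j)
  have hfinal := good_add (good_add hU hV) hW
  rw [← hTsplit] at hfinal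
  intro i j
  apply rp.denom_eval_ne (hfinal.2.2 i j)
  have herase : (∏ j ∈ Finset.univ.erase i₀, qDD n z j).eval (z i₀) ≠ 0 := by
    rw [Polynomial.eval_prod]
    refine Finset.prod_ne_zero_iff.2 fun l hl => ?_
    have hlne : l ≠ i₀ := Finset.ne_of_mem_erase hl
    simp only [qDD, Polynomial.eval_mul, Polynomial.eval_one, mul_one,
      Polynomial.eval_sub, Polynomial.eval_X, Polynomial.eval_C]
    exact hzz l hlne
  simp only [Polynomial.eval_mul, Polynomial.eval_one, mul_one, one_mul]
  exact mul_ne_zero (mul_ne_zero (mul_ne_zero (mul_ne_zero hqA hqB) hqY) hqM) herase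

end BlaschkeAux

open BlaschkeAux in
/-- Matrix form of Lemma 1: for distinct NMP zeros `z_i` with directions `η_i` and a
stable proper rational matrix `Y`, there is a stable proper rational matrix `T` with
`L(s)⁻¹ Y(s) = T(s) + Σ_i (1/(s - z_i)) R_i` wherever all terms are defined. -/
theorem inverse_blaschke_partial_fraction_matrix
    (m n : ℕ) (z : Fin n → ℂ) (hz : ∀ i, 0 < (z i).re)
    (hdist : Function.Injective z)
    (η : Fin n → Fin m → ℂ)
    (hη : ∀ k, ∑ i, starRingEnd ℂ (η k i) * η k i = 1)
    (Y : Matrix (Fin m) (Fin m) (RatFunc ℂ))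
    (hY_proper : ∀ i j, (Y i j).num.degree ≤ (Y i j).denom.degree)
    (hY_stable : ∀ i j, ∀ x : ℂ, Polynomial.eval x (Y i j).denom = 0 → x.re < 0) :
    ∃ T : Matrix (Fin m) (Fin m) (RatFunc ℂ),
      (∀ i j, (T i j).num.degree ≤ (T i j).denom.degree) ∧
      (∀ i j, ∀ x : ℂ, Polynomial.eval x (T i j).denom = 0 → x.re < 0) ∧
      ∀ s : ℂ, (∀ k, s ≠ z k) → (∀ k, s ≠ -starRingEnd ℂ (z k)) →
        (∀ i j, Polynomial.eval s (Y i j).denom ≠ 0) →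
        (∀ i j, Polynomial.eval s (T i j).denom ≠ 0) →
        ((List.ofFn fun k : Fin n => blaschkeFactor m (z k) (η k) s).prod)⁻¹ *
            (Y.map (RatFunc.eval (RingHom.id ℂ) s))
          = T.map (RatFunc.eval (RingHom.id ℂ) s) +
            ∑ i, (1 / (s - z i)) • residueMatrix m n z η Y i := by
  classical
  have hT := good_TT n z η Y hY_proper
  refine ⟨TT n z η Y, fun i j => (hT.2.2 i j).num_deg_le hT.1 (hT.2.1 i j), ?_, ?_⟩
  · -- stability
    intro i j x hx
    obtain ⟨e, he⟩ := (hT.2.2 i j).denom_dvd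
    have hq : (qTD n z Y).eval x = 0 := by rw [he, Polynomial.eval_mul, hx, zero_mul]
    rw [qTD, Polynomial.eval_mul, Polynomial.eval_mul] at hq
    rcases mul_eq_zero.1 hq with h12 | h3
    · rcases mul_eq_zero.1 h12 with h1 | h2
      · rw [qLD, Polynomial.eval_prod] at h1
        obtain ⟨k, _, hk⟩ := Finset.prod_eq_zero_iff.1 h1
        have hxk : x = z k := by
          simp only [Polynomial.eval_sub, Polynomial.eval_X, Polynomial.eval_C] at hk
          exact sub_eq_zero.1 hk
        exact absurd (hxk ▸ hx)
          (denom_TT_ne n z η Y hz hdist hη hY_proper hY_stable k i j)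
      · rw [qYD, Polynomial.eval_prod] at h2
        obtain ⟨p, _, hp⟩ := Finset.prod_eq_zero_iff.1 h2
        exact hY_stable p.1 p.2 x hp
    · rw [qSDD, Polynomial.eval_prod] at h3
      obtain ⟨k, _, hk⟩ := Finset.prod_eq_zero_iff.1 h3
      have hxk : x = z k := by
        simp only [qDD, Polynomial.eval_mul, Polynomial.eval_one, mul_one,
          Polynomial.eval_sub, Polynomial.eval_X, Polynomial.eval_C] at hk
        exact sub_eq_zero.1 hk
      exact absurd (hxk ▸ hx)
        (denom_TT_ne n z η Y hz hdist hη hY_proper hY_stable k i j)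
  · -- the evaluation identity
    intro s hs1 hs2 hsY _
    have hsz : ∀ k, s - z k ≠ 0 := fun k => sub_ne_zero.mpr (hs1 k)
    have hqL : (qLD n z).eval s ≠ 0 := by
      rw [qLD, Polynomial.eval_prod]
      exact Finset.prod_ne_zero_iff.2 fun k _ => by simpa using hsz k
    have hqYs : (qYD Y).eval s ≠ 0 := by
      rw [qYD, Polynomial.eval_prod]
      exact Finset.prod_ne_zero_iff.2 fun p _ => hsY p.1 p.2
    have hqD : ∀ k, (qDD n z k).eval s ≠ 0 := fun k => by
      simp only [qDD, Polynomial.eval_mul, Polynomial.eval_one, mul_one,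
        Polynomial.eval_sub, Polynomial.eval_X, Polynomial.eval_C]
      exact hsz k
    have hqSD : (qSDD n z).eval s ≠ 0 := by
      rw [qSDD, Polynomial.eval_prod]
      exact Finset.prod_ne_zero_iff.2 fun k _ => hqD k
    have hqT : (qTD n z Y).eval s ≠ 0 := by
      rw [qTD]
      simp only [Polynomial.eval_mul]
      exact mul_ne_zero (mul_ne_zero hqL hqYs) hqSD
    have hLg : good (LinvD n z η) (NLD n z η) (qLD n z) := by
      rw [LinvD, NLD, qLD]
      exact good_ofFn_rev_prod _ _ _ fun k => good_bInv _ _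
    have hYg : good Y (NYD Y) (qYD Y) := good_of_proper Y hY_proper
    have hLval : (LinvD n z η).map (RatFunc.eval (RingHom.id ℂ) s)
        = (List.ofFn fun k => bVal m (z k) (η k) s).reverse.prod := by
      rw [LinvD, evalM_ofFn_rev_prod (fun k => bInv m (z k) (η k))
        (fun k => bInvN m (z k) (η k)) (fun k => Polynomial.X - Polynomial.C (z k))
        (fun k => good_bInv _ _) (fun k => by simpa using hsz k)]
      exact congrArg List.prod (congrArg List.reverse
        (congrArg List.ofFn (funext fun k => eval_bInv (hs1 k))))
    have hwsum : ∀ k, s + starRingEnd ℂ (z k) ≠ 0 := fun k h0 =>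
      hs2 k (eq_neg_of_add_eq_zero_left h0)
    have hone : (List.ofFn fun k => blaschkeFactor m (z k) (η k) s).prod *
        (LinvD n z η).map (RatFunc.eval (RingHom.id ℂ) s) = 1 := by
      rw [hLval]
      exact ofFn_prod_mul_rev_prod _ _ fun k => blaschke_mul_bVal (hη k) (hs1 k) (hwsum k)
    rw [Matrix.inv_eq_right_inv hone,
      ← evalM_mul hLg hYg hqL hqYs]
    have h2 : LinvD n z η * Y = TT n z η Y + SDD n z η Y := by
      rw [TT]; abel
    rw [h2, evalM_add hT.2.2 (good_SD n z η Y).2.2 hqT hqSD, SDD,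
      evalM_sum (fun j (_ : j ∈ Finset.univ) => good_Dm n z η Y j) (fun j _ => hqD j)]
    congr 1
    refine Finset.sum_congr rfl fun k _ => ?_
    rw [good_eval (good_Dm n z η Y k) (hqD k)]
    ext a b
    simp only [NDD, qDD, Matrix.smul_apply, Matrix.map_apply, Matrix.one_apply,
      smul_eq_mul, Polynomial.eval_mul, Polynomial.eval_one, mul_one,
      Polynomial.eval_sub, Polynomial.eval_X, Polynomial.eval_C, one_div,
      Matrix.smul_apply, one_smul, Polynomial.eval_C]
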